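/- Let S be a 3×3 real matrix and E > 0 a real number such that S³ = -E·S. Then for all t ∈ ℝ, exp(t·S) = I + (sin(t√E)/√E)·S + ((1 - cos(t√E))/E)·S². -/

import Mathlib

open NormedSpace

theorem stmt_5 (S : Matrix (Fin 3) (Fin 3) ℝ) (E : ℝ) (hE : 0 < E)
    (hS : S ^ 3 = -E • S) (t : ℝ) :
    exp (t • S) =
      1 + (Real.sin (t * Real.sqrt E) / Real.sqrt E) • S +
        ((1 - Real.cos (t * Real.sqrt E)) / E) • S ^ 2 := by
  set s := Real.sqrt E with hs
  have hs0 : 0 < s := Real.sqrt_pos.mpr hE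
  have hs2 : s ^ 2 = E := Real.sq_sqrt hE.le
  set x := t * s with hx
  have hodd : ∀ k : ℕ, S ^ (2 * k + 1) = ((-E) ^ k) • S := by
    intro k
    induction k with
    | zero => simp
    | succ k ih =>
      rw [show 2 * (k + 1) + 1 = (2 * k + 1) + 2 by ring, pow_add, ih, Matrix.smul_mul,
        ← pow_succ' S 2, show (2:ℕ) + 1 = 3 from rfl, hS, smul_smul, ← pow_succ]
  have heven : ∀ k : ℕ, S ^ (2 * k + 2) = ((-E) ^ k) • S ^ 2 := by
    intro k
    rw [show 2 * k + 2 = (2 * k + 1) + 1 by ring, pow_succ, hodd k, Matrix.smul_mul, ← sq]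
  set f : ℕ → Matrix (Fin 3) (Fin 3) ℝ := fun n => ((n.factorial : ℝ)⁻¹) • (t • S) ^ n with hf
  -- odd part
  have hOddScalar : HasSum
      (fun k : ℕ => (-1 : ℝ) ^ k * x ^ (2 * k + 1) / ((2 * k + 1).factorial : ℝ) / s)
      (Real.sin x / s) := (Real.hasSum_sin x).div_const s
  have hOdd : HasSum (fun k : ℕ => f (2 * k + 1)) ((Real.sin x / s) • S) := by
    have h := hOddScalar.smul_const S
    convert h using 2 with k
    rw [hf]
    simp only [smul_pow, hodd k, smul_smul]
    congr 1
    have hfac : ((2 * k + 1).factorial : ℝ) ≠ 0 := by positivity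
    rw [hx, ← hs2]
    field_simp
    ring
  -- even part
  have hCosShift : HasSum
      (fun k : ℕ => (-1 : ℝ) ^ (k + 1) * x ^ (2 * (k + 1)) / ((2 * (k + 1)).factorial : ℝ))
      (Real.cos x - 1) := by
    rw [hasSum_nat_add_iff
      (f := fun n : ℕ => (-1 : ℝ) ^ n * x ^ (2 * n) / ((2 * n).factorial : ℝ)) 1]
    simpa using Real.hasSum_cos x
  have hEvenScalar : HasSum
      (fun k : ℕ => -((-1 : ℝ) ^ (k + 1) * x ^ (2 * (k + 1)) / ((2 * (k + 1)).factorial : ℝ)) / E)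
      ((1 - Real.cos x) / E) := by
    have h := (hCosShift.neg).div_const E
    convert h using 2
    · rfl
    ring
  have hEvenShift : HasSum (fun k : ℕ => f (2 * (k + 1))) (((1 - Real.cos x) / E) • S ^ 2) := by
    have h := hEvenScalar.smul_const (S ^ 2)
    convert h using 2 with k
    rw [hf]
    simp only [smul_pow, show 2 * (k + 1) = 2 * k + 2 by ring, heven k, smul_smul]
    congr 1
    have hfac : ((2 * k + 2).factorial : ℝ) ≠ 0 := by positivity
    rw [hx, ← hs2]
    field_simp
    ring
  have hEven : HasSum (fun k : ℕ => f (2 * k)) (((1 - Real.cos x) / E) • S ^ 2 + 1) := by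
    have h2 := (hasSum_nat_add_iff (f := fun k : ℕ => f (2 * k)) 1).mp hEvenShift
    simpa [hf] using h2
  have hTotal : HasSum f
      ((((1 - Real.cos x) / E) • S ^ 2 + 1) + (Real.sin x / s) • S) :=
    hEven.even_add_odd hOdd
  rw [exp_eq_tsum (𝕂 := ℝ)]
  show (∑' n : ℕ, ((n.factorial : ℝ)⁻¹) • (t • S) ^ n) = _
  rw [← hf, hTotal.tsum_eq]
  abel
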